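/- Let g be the maximal transitive prolongation of an extended translation algebra m = V + W with dim V ≥ 3, and φ : g₁ → W the unique linear map with [D,v] = v·φ(D) for all D ∈ g₁, v ∈ V. Then φ is injective and so(V)-equivariant: φ([A,D]) = A·φ(D) for all A ∈ so(V) ⊂ g₀ and D ∈ g₁ (where A acts on W by the spin representation). -/

import Mathlib

universe u

/-- `(L, g, ιV, ιW)` is a transitive graded (Tanaka) prolongation of the fundamental
graded Lie algebra `m = m₋₂ + m₋₁ = V + W` with bracket `br : W × W → V`:
`g` is a ℤ-gradation of `L` by finite-dimensional subspaces, vanishing in degrees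
`< -2`, transitive in non-negative degrees, and `ιV, ιW` identify `V, W` with
`g (-2), g (-1)` compatibly with the bracket. -/
structure IsGradedProlong (K : Type*) [Field K]
    (V W : Type*) [AddCommGroup V] [Module K V] [AddCommGroup W] [Module K W]
    (L : Type*) [LieRing L] [LieAlgebra K L]
    (br : W →ₗ[K] W →ₗ[K] V)
    (g : ℤ → Submodule K L) (ιV : V →ₗ[K] L) (ιW : W →ₗ[K] L) : Prop where
  bracket_mem : ∀ i j : ℤ, ∀ x ∈ g i, ∀ y ∈ g j, ⁅x, y⁆ ∈ g (i + j)
  low_eq_bot : ∀ i : ℤ, i < -2 → g i = ⊥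
  finite_dim : ∀ i : ℤ, FiniteDimensional K (g i)
  indep : iSupIndep g
  supr_eq_top : ⨆ i, g i = ⊤
  transitive : ∀ p : ℤ, 0 ≤ p → ∀ x ∈ g p, (∀ y ∈ g (-1 : ℤ), ⁅x, y⁆ = 0) → x = 0
  range_iV : LinearMap.range ιV = g (-2 : ℤ)
  range_iW : LinearMap.range ιW = g (-1 : ℤ)
  inj_iV : Function.Injective ιV
  inj_iW : Function.Injective ιW
  bracket_iW : ∀ s t : W, ⁅ιW s, ιW t⁆ = ιV (br s t)

/-- `(L, g, ιV, ιW)` is the *maximal* transitive prolongation of `m = V + W`: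
it is a transitive graded prolongation, and every other transitive graded
prolongation of `m` embeds into it by an injective graded Lie algebra morphism
restricting to the identity on `m`. -/
def IsMaxGradedProlong (K : Type*) [Field K]
    (V W : Type*) [AddCommGroup V] [Module K V] [AddCommGroup W] [Module K W]
    (L : Type*) [LieRing L] [LieAlgebra K L]
    (br : W →ₗ[K] W →ₗ[K] V)
    (g : ℤ → Submodule K L) (ιV : V →ₗ[K] L) (ιW : W →ₗ[K] L) : Prop :=
  IsGradedProlong K V W L br g ιV ιW ∧
  ∀ (L' : Type u) [LieRing L'] [LieAlgebra K L']
    (g' : ℤ → Submodule K L') (ιV' : V →ₗ[K] L') (ιW' : W →ₗ[K] L'),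
    IsGradedProlong K V W L' br g' ιV' ιW' →
    ∃ φ : L' →ₗ⁅K⁆ L, Function.Injective φ ∧
      (∀ i : ℤ, ∀ x ∈ g' i, φ x ∈ g i) ∧
      (∀ v : V, φ (ιV' v) = ιV v) ∧ (∀ s : W, φ (ιW' s) = ιW s)


/-- In a nondegenerate symmetric bilinear space of dimension ≥ 3 over a field of
characteristic zero, there exist three pairwise orthogonal anisotropic vectors. -/
private lemma exists_orth_triple {K : Type*} [Field K] [CharZero K]
    {V : Type*} [AddCommGroup V] [Module K V] [FiniteDimensional K V]
    (hdim : 3 ≤ Module.finrank K V)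
    (B : V →ₗ[K] V →ₗ[K] K)
    (hBsymm : ∀ v u : V, B v u = B u v)
    (hBnd : ∀ v : V, (∀ u : V, B v u = 0) → v = 0) :
    ∃ x y z : V, B x x ≠ 0 ∧ B y y ≠ 0 ∧ B z z ≠ 0 ∧
      B x y = 0 ∧ B x z = 0 ∧ B y z = 0 := by
  have h2 : (2:K) ≠ 0 := two_ne_zero
  have hpol : ∀ (S : Submodule K V), (∀ v ∈ S, B v v = 0) →
      ∀ a ∈ S, ∀ b ∈ S, B a b = 0 := by
    intro S h a ha b hb
    have h1 := h (a + b) (S.add_mem ha hb)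
    simp only [map_add, LinearMap.add_apply] at h1
    rw [h a ha, h b hb, hBsymm b a] at h1
    have h3 : (2:K) * B a b = 0 := by linear_combination h1
    exact (mul_eq_zero.mp h3).resolve_left h2
  have hx : ∃ x : V, B x x ≠ 0 := by
    by_contra h
    push_neg at h
    have hall : ∀ a b : V, B a b = 0 := fun a b =>
      hpol ⊤ (fun v _ => h v) a trivial b trivial
    have hzero : ∀ v : V, v = 0 := fun v => hBnd v (hall v)
    have : Subsingleton V := ⟨fun a b => by rw [hzero a, hzero b]⟩
    have h0 : Module.finrank K V = 0 := Module.finrank_zero_of_subsingleton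
    omega
  obtain ⟨x, hxx⟩ := hx
  have hy : ∃ y, y ∈ LinearMap.ker (B x) ∧ B y y ≠ 0 := by
    by_contra h
    push_neg at h
    have hker : LinearMap.ker (B x) ≠ ⊥ := by
      intro hbot
      have hr := LinearMap.finrank_range_add_finrank_ker (B x)
      have hle : Module.finrank K (LinearMap.range (B x)) ≤ 1 := by
        have := Submodule.finrank_le (LinearMap.range (B x))
        simpa [Module.finrank_self] using this
      rw [hbot, finrank_bot] at hr
      omega
    obtain ⟨u, huk, hu0⟩ := (Submodule.ne_bot_iff _).mp hker
    apply hu0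
    apply hBnd
    intro w
    have hc : B x (w - (B x w / B x x) • x) = 0 := by
      simp only [map_sub, map_smul, smul_eq_mul]
      field_simp
      ring
    have h1 : B u (w - (B x w / B x x) • x) = 0 :=
      hpol (LinearMap.ker (B x)) h u huk _ (LinearMap.mem_ker.mpr hc)
    have hux : B u x = 0 := by rw [hBsymm u x]; exact LinearMap.mem_ker.mp huk
    have h3 : B u w = B u (w - (B x w / B x x) • x) + (B x w / B x x) * B u x := by
      simp only [map_sub, map_smul, smul_eq_mul]; ring
    rw [h3, h1, hux]; ring
  obtain ⟨y, hyk, hyy⟩ := hy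
  have hxy : B x y = 0 := LinearMap.mem_ker.mp hyk
  have hS2mem : ∀ w, w ∈ LinearMap.ker ((B x).prod (B y)) ↔ B x w = 0 ∧ B y w = 0 := by
    intro w
    simp [LinearMap.mem_ker, LinearMap.prod_apply, Prod.ext_iff]
  have hz : ∃ z, z ∈ LinearMap.ker ((B x).prod (B y)) ∧ B z z ≠ 0 := by
    by_contra h
    push_neg at h
    have hker : LinearMap.ker ((B x).prod (B y)) ≠ ⊥ := by
      intro hbot
      have hr := LinearMap.finrank_range_add_finrank_ker ((B x).prod (B y))
      have hle : Module.finrank K (LinearMap.range ((B x).prod (B y))) ≤ 2 := by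
        have h1 := Submodule.finrank_le (LinearMap.range ((B x).prod (B y)))
        have hKK : Module.finrank K (K × K) = 2 := by simp [Module.finrank_prod]
        omega
      rw [hbot, finrank_bot] at hr
      omega
    obtain ⟨t, htk, ht0⟩ := (Submodule.ne_bot_iff _).mp hker
    apply ht0
    apply hBnd
    intro w
    have hyx : B y x = 0 := by rw [hBsymm y x]; exact hxy
    have hw : w - (B x w / B x x) • x - (B y w / B y y) • y ∈
        LinearMap.ker ((B x).prod (B y)) := by
      rw [hS2mem]
      constructor
      · simp only [map_sub, map_smul, smul_eq_mul]
        rw [hxy]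
        field_simp
        ring
      · simp only [map_sub, map_smul, smul_eq_mul]
        rw [hyx]
        field_simp
        ring
    have htx : B t x = 0 := by rw [hBsymm t x]; exact ((hS2mem t).mp htk).1
    have hty : B t y = 0 := by rw [hBsymm t y]; exact ((hS2mem t).mp htk).2
    have h1 : B t (w - (B x w / B x x) • x - (B y w / B y y) • y) = 0 :=
      hpol _ h t htk _ hw
    have h3 : B t w = B t (w - (B x w / B x x) • x - (B y w / B y y) • y)
        + (B x w / B x x) * B t x + (B y w / B y y) * B t y := by
      simp only [map_sub, map_smul, smul_eq_mul]; ring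
    rw [h3, h1, htx, hty]; ring
  obtain ⟨z, hzk, hzz⟩ := hz
  exact ⟨x, y, z, hxx, hyy, hzz, hxy, ((hS2mem z).mp hzk).1, ((hS2mem z).mp hzk).2⟩
/-- the canonical map `φ : g₁ → W` (defined by `⁅D, v⁆ = v·φ(D)`)
is injective and `so(V)`-equivariant: for any `a ∈ g₀` acting on `V` as the
element `vu - uv ∈ so(V)` and on `W` by the spin representation,
`φ(⁅a, D⁆) = (vu - uv)·φ(D)`. -/
theorem phi_injective_equivariant
    {K : Type*} [Field K] [CharZero K]
    {V : Type*} [AddCommGroup V] [Module K V] [FiniteDimensional K V]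
    {W : Type*} [AddCommGroup W] [Module K W]
    {L : Type*} [LieRing L] [LieAlgebra K L]
    (hdim : 3 ≤ Module.finrank K V)
    (B : V →ₗ[K] V →ₗ[K] K)
    (hBsymm : ∀ v u : V, B v u = B u v)
    (hBnd : ∀ v : V, (∀ u : V, B v u = 0) → v = 0)
    (cl : V →ₗ[K] W →ₗ[K] W)
    (hcl : ∀ (v : V) (s : W), cl v (cl v s) = -(B v v) • s)
    (bW : W →ₗ[K] W →ₗ[K] K)
    (hbWnd : ∀ s : W, (∀ t : W, bW s t = 0) → s = 0)
    (ε : K) (hε : ε = 1 ∨ ε = -1)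
    (hbWrefl : ∀ s t : W, bW s t = -(ε * bW t s))
    (hbWcl : ∀ (v : V) (s t : W), bW (cl v s) t = ε * bW s (cl v t))
    (br : W →ₗ[K] W →ₗ[K] V)
    (hbr : ∀ (s t : W) (v : V), B (br s t) v = bW (cl v s) t)
    (g : ℤ → Submodule K L) (ιV : V →ₗ[K] L) (ιW : W →ₗ[K] L)
    (hmax : IsMaxGradedProlong K V W L br g ιV ιW)
    (φ : g (1 : ℤ) →ₗ[K] W)
    (hφ : ∀ (D : g (1 : ℤ)) (v : V), ⁅(D : L), ιV v⁆ = ιW (cl v (φ D))) :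
    Function.Injective φ ∧
    ∀ (v u : V) (a : L), a ∈ g (0 : ℤ) →
      (∀ x : V, ⁅a, ιV x⁆ = ιV ((4 * B v x) • u - (4 * B u x) • v)) →
      (∀ s : W, ⁅a, ιW s⁆ = ιW (cl v (cl u s) - cl u (cl v s))) →
      ∀ (D : g (1 : ℤ)) (hmem : ⁅a, (D : L)⁆ ∈ g (1 : ℤ)),
        φ ⟨⁅a, (D : L)⁆, hmem⟩ = cl v (cl u (φ D)) - cl u (cl v (φ D)) := by
  obtain ⟨hp, -⟩ := hmax
  -- basic facts about ε
  have hε2 : ε * ε = 1 := by rcases hε with h | h <;> rw [h] <;> ring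
  have hεne : ε ≠ 0 := by rcases hε with h | h <;> rw [h] <;> norm_num
  -- anticommutation relation in the Clifford module
  have hAC : ∀ (a b : V) (w : W), cl a (cl b w) + cl b (cl a w) = -((2 * B a b) • w) := by
    intro a b w
    have h := hcl (a + b) w
    simp only [map_add, LinearMap.add_apply] at h
    rw [hcl a w, hcl b w, hBsymm b a] at h
    linear_combination (norm := module) h
  have hACperp : ∀ (a b : V), B a b = 0 → ∀ w : W, cl a (cl b w) = -(cl b (cl a w)) := by
    intro a b hab w
    have h := hAC a b w
    rw [hab, mul_zero, zero_smul, neg_zero] at h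
    exact eq_neg_of_add_eq_zero_left h
  -- injectivity and surjectivity of Clifford multiplication by an anisotropic vector
  have hσinj : ∀ e : V, B e e ≠ 0 → ∀ w : W, cl e w = 0 → w = 0 := by
    intro e he w hw
    have h := hcl e w
    rw [hw, map_zero] at h
    have h2 : -(B e e) • w = 0 := h.symm
    rw [neg_smul, neg_eq_zero] at h2
    exact (smul_eq_zero.mp h2).resolve_left he
  have hσsurj : ∀ e : V, B e e ≠ 0 → ∀ s : W, cl e ((-(B e e)⁻¹) • cl e s) = s := by
    intro e he s
    rw [map_smul, hcl e s, smul_smul]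
    rw [show (-(B e e)⁻¹) * (-(B e e)) = (1:K) by field_simp]
    exact one_smul _ _
  -- an orthogonal anisotropic triple
  obtain ⟨x, y, z, hxx, hyy, hzz, hxy, hxz, hyz⟩ := exists_orth_triple hdim B hBsymm hBnd
  -- Clifford multiplication separates points
  have hclnd : ∀ w : W, (∀ e : V, cl e w = 0) → w = 0 := fun w h => hσinj x hxx w (h x)
  -- right nondegeneracy of bW
  have hbWnd' : ∀ w : W, (∀ t : W, bW t w = 0) → w = 0 := by
    intro w hw
    refine hbWnd w fun t => ?_
    rw [hbWrefl w t, hw t, mul_zero, neg_zero]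
  -- memberships
  have hmemW : ∀ s : W, ιW s ∈ g (-1 : ℤ) := fun s => hp.range_iW ▸ LinearMap.mem_range_self ιW s
  have hmemV : ∀ v : V, ιV v ∈ g (-2 : ℤ) := fun v => hp.range_iV ▸ LinearMap.mem_range_self ιV v
  constructor
  · -- INJECTIVITY
    rw [injective_iff_map_eq_zero]
    intro D hD0
    have hDV : ∀ v : V, ⁅(D : L), ιV v⁆ = 0 := by
      intro v
      rw [hφ D v, hD0, map_zero, map_zero]
    have haV : ∀ (s : W) (v : V), ⁅⁅(D : L), ιW s⁆, ιV v⁆ = 0 := by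
      intro s v
      rw [lie_lie]
      have h1 : ⁅ιW s, ιV v⁆ = 0 := by
        have hm := hp.bracket_mem (-1) (-2) (ιW s) (hmemW s) (ιV v) (hmemV v)
        rw [hp.low_eq_bot (-1 + -2) (by norm_num)] at hm
        simpa using hm
      rw [h1, lie_zero, hDV v, lie_zero, sub_zero]
    have hcex : ∀ s t : W, ∃ w : W, ιW w = ⁅⁅(D : L), ιW s⁆, ιW t⁆ := by
      intro s t
      have hm0 : ⁅(D : L), ιW s⁆ ∈ g (0 : ℤ) := by
        have h := hp.bracket_mem 1 (-1) (D : L) D.2 (ιW s) (hmemW s)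
        rwa [show (1 + -1 : ℤ) = 0 by norm_num] at h
      have hm := hp.bracket_mem 0 (-1) _ hm0 (ιW t) (hmemW t)
      rw [show (0 + -1 : ℤ) = -1 by norm_num, ← hp.range_iW] at hm
      exact LinearMap.mem_range.mp hm
    choose c hc using hcex
    -- symmetry of c
    have hS1 : ∀ s t : W, c s t = c t s := by
      intro s t
      apply hp.inj_iW
      rw [hc s t, hc t s]
      calc ⁅⁅(D : L), ιW s⁆, ιW t⁆
          = ⁅(D : L), ⁅ιW s, ιW t⁆⁆ - ⁅ιW s, ⁅(D : L), ιW t⁆⁆ := lie_lie _ _ _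
        _ = -⁅ιW s, ⁅(D : L), ιW t⁆⁆ := by
            rw [hp.bracket_iW s t, hDV (br s t), zero_sub]
        _ = ⁅⁅(D : L), ιW t⁆, ιW s⁆ := lie_skew _ _
    -- the bracket condition
    have hbrrel : ∀ s t r : W, br (c s t) r = -(br t (c s r)) := by
      intro s t r
      have h0 : ⁅⁅(D : L), ιW s⁆, ιV (br t r)⁆ = 0 := haV s (br t r)
      rw [← hp.bracket_iW t r, leibniz_lie, ← hc s t, ← hc s r,
        hp.bracket_iW (c s t) r, hp.bracket_iW t (c s r), ← map_add] at h0
      have h1 : ιV (br (c s t) r + br t (c s r)) = ιV 0 := by rw [map_zero]; exact h0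
      exact eq_neg_of_add_eq_zero_left (hp.inj_iV h1)
    -- symmetry in the last two slots
    have hS2 : ∀ (e : V) (s t r : W), bW (c s t) (cl e r) = bW (c s r) (cl e t) := by
      intro e s t r
      have h1 : B (br (c s t) r) e = -(B (br t (c s r)) e) := by
        rw [hbrrel s t r]; simp
      rw [hbr, hbr, hbWcl e (c s t) r, hbWrefl (cl e t) (c s r)] at h1
      rw [neg_neg] at h1
      exact mul_left_cancel₀ hεne h1
    have hS3 : ∀ (e : V) (a b t : W), bW (c a b) (cl e t) = bW (c t b) (cl e a) := by
      intro e a b t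
      rw [hS1 a b, hS2 e b a t, hS1 b t]
    -- KEY1
    have hKEY1 : ∀ (e : V) (r s t : W),
        bW t (cl e (c (cl e r) s)) = B e e * bW (c s t) r := by
      intro e r s t
      have h1 : bW (cl e t) (c (cl e r) s) = ε * bW t (cl e (c (cl e r) s)) := hbWcl e t _
      have h2 : bW (cl e t) (c (cl e r) s) = -(ε * bW (c (cl e r) s) (cl e t)) :=
        hbWrefl _ _
      have h3 : bW (c (cl e r) s) (cl e t) = bW (c t s) (cl e (cl e r)) := hS3 e (cl e r) s t
      have h5 : ε * bW t (cl e (c (cl e r) s)) = ε * (B e e * bW (c s t) r) := by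
        rw [← h1, h2, h3, hcl e r, map_smul, smul_eq_mul, hS1 t s]
        ring
      exact mul_left_cancel₀ hεne h5
    -- the auxiliary map U
    set U : W → W → W := fun r s => (B x x)⁻¹ • cl x (c (cl x r) s) with hUdef
    have hUpair : ∀ r s t : W, bW t (U r s) = bW (c s t) r := by
      intro r s t
      rw [hUdef]
      simp only
      rw [map_smul, smul_eq_mul, hKEY1 x r s t]
      field_simp
    have hKEY2 : ∀ e : V, B e e ≠ 0 → ∀ r s : W,
        cl e (c (cl e r) s) = (B e e) • U r s := by
      intro e he r s
      have hdif : ∀ t : W, bW t (cl e (c (cl e r) s) - (B e e) • U r s) = 0 := by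
        intro t
        rw [map_sub, hKEY1 e r s t, map_smul, smul_eq_mul, hUpair r s t, sub_self]
      have h0 := hbWnd' _ hdif
      exact sub_eq_zero.mp h0
    have hN1 : ∀ e : V, B e e ≠ 0 → ∀ r s : W, c (cl e r) s = -(cl e (U r s)) := by
      intro e he r s
      have h1 : cl e (c (cl e r) s + cl e (U r s)) = 0 := by
        rw [map_add, hKEY2 e he r s, hcl e (U r s), neg_smul]
        exact add_neg_cancel _
      exact eq_neg_of_add_eq_zero_left (hσinj e he _ h1)
    have hN3 : ∀ a b : V, B a a ≠ 0 → B b b ≠ 0 → ∀ r w : W,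
        cl a (U r (cl b w)) = cl b (U w (cl a r)) := by
      intro a b ha hb r w
      have h1 : c (cl b w) (cl a r) = -(cl b (U w (cl a r))) := hN1 b hb w (cl a r)
      have h2 : c (cl b w) (cl a r) = c (cl a r) (cl b w) := hS1 _ _
      have h3 : c (cl a r) (cl b w) = -(cl a (U r (cl b w))) := hN1 a ha r (cl b w)
      have h4 : -(cl a (U r (cl b w))) = -(cl b (U w (cl a r))) :=
        h3.symm.trans (h2.symm.trans h1)
      exact neg_inj.mp h4
    have hN4 : ∀ b : V, B b b ≠ 0 → ∀ r w : W, U r (cl b w) = U w (cl b r) := by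
      intro b hb r w
      have h := hN3 b b hb hb r w
      have h1 : cl b (U r (cl b w) - U w (cl b r)) = 0 := by
        rw [map_sub, h, sub_self]
      exact sub_eq_zero.mp (hσinj b hb _ h1)
    have hN5 : ∀ a b : V, B a a ≠ 0 → B b b ≠ 0 → ∀ w r : W,
        cl a (U w (cl b r)) = cl b (U w (cl a r)) := by
      intro a b ha hb w r
      rw [show U w (cl b r) = U r (cl b w) from (hN4 b hb r w).symm]
      exact hN3 a b ha hb r w
    have hT2 : ∀ a b : V, B a a ≠ 0 → B b b ≠ 0 → B a b = 0 → ∀ w r : W,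
        cl a (cl b (U w (cl b r))) = (B b b) • U w (cl a r) := by
      intro a b ha hb hab w r
      have h1 : cl b (cl a (U w (cl b r))) = cl b (cl b (U w (cl a r))) :=
        congrArg _ (hN5 a b ha hb w r)
      rw [hcl b (U w (cl a r))] at h1
      have h2 : cl a (cl b (U w (cl b r))) = -(cl b (cl a (U w (cl b r)))) :=
        hACperp a b hab _
      rw [h2, h1, neg_smul, neg_neg]
    -- the final kill, using all three directions
    have hUzero : ∀ w r : W, U w (cl z r) = 0 := by
      intro w r
      have h1 : cl x (cl y (U w (cl y r))) = (B y y) • U w (cl x r) :=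
        hT2 x y hxx hyy hxy w r
      have h2 := congrArg (cl z) h1
      have h3 : cl z (cl x (cl y (U w (cl y r)))) = -(cl x (cl z (cl y (U w (cl y r))))) :=
        hACperp z x (by rw [hBsymm z x]; exact hxz) _
      have h4 : cl z (cl y (U w (cl y r))) = (B y y) • U w (cl z r) :=
        hT2 z y hzz hyy (by rw [hBsymm z y]; exact hyz) w r
      have h5 : cl z (U w (cl x r)) = cl x (U w (cl z r)) := hN5 z x hzz hxx w r
      have hLs : cl z (cl x (cl y (U w (cl y r)))) = -((B y y) • cl x (U w (cl z r))) := by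
        rw [h3, h4]
        exact congrArg Neg.neg (map_smul (cl x) (B y y) (U w (cl z r)))
      have hRs : cl z ((B y y) • U w (cl x r)) = (B y y) • cl x (U w (cl z r)) := by
        rw [map_smul (cl z) (B y y) (U w (cl x r)), h5]
      have h2' := hLs.symm.trans (h2.trans hRs)
      clear h2
      have h2 := h2'
      have h6 : (B y y) • cl x (U w (cl z r)) + (B y y) • cl x (U w (cl z r)) = 0 := by
        nth_rewrite 1 [← h2]
        exact neg_add_cancel _
      have h7 : (2 * B y y) • cl x (U w (cl z r)) = 0 := by
        rw [mul_smul, two_smul]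
        exact h6
      have h8 : cl x (U w (cl z r)) = 0 := by
        rcases smul_eq_zero.mp h7 with h | h
        · exact absurd h (mul_ne_zero (two_ne_zero) hyy)
        · exact h
      exact hσinj x hxx _ h8
    have hU0 : ∀ w s : W, U w s = 0 := by
      intro w s
      have h := hσsurj z hzz s
      rw [← h]
      exact hUzero w _
    have hc0 : ∀ s t : W, c s t = 0 := by
      intro s t
      have hsx := hσsurj x hxx s
      rw [← hsx, hN1 x hxx _ t, hU0, map_zero, neg_zero]
    have ha0 : ∀ s : W, ⁅(D : L), ιW s⁆ = 0 := by
      intro s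
      have hm0 : ⁅(D : L), ιW s⁆ ∈ g (0 : ℤ) := by
        have h := hp.bracket_mem 1 (-1) (D : L) D.2 (ιW s) (hmemW s)
        rwa [show (1 + -1 : ℤ) = 0 by norm_num] at h
      apply hp.transitive 0 le_rfl _ hm0
      intro yy hyy
      rw [← hp.range_iW] at hyy
      obtain ⟨t, rfl⟩ := LinearMap.mem_range.mp hyy
      rw [← hc s t, hc0 s t, map_zero]
    have hD : (D : L) = 0 := by
      apply hp.transitive 1 (by norm_num) _ D.2
      intro yy hyy
      rw [← hp.range_iW] at hyy
      obtain ⟨t, rfl⟩ := LinearMap.mem_range.mp hyy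
      exact ha0 t
    exact Subtype.ext hD
  · -- EQUIVARIANCE
    intro v u a ha hactV hactW D hmem
    set w0 := φ D with hw0
    set D' : g (1 : ℤ) := ⟨⁅a, (D : L)⁆, hmem⟩ with hD'
    have hkey : ∀ e : V, cl e (φ D') =
        cl v (cl u (cl e w0)) - cl u (cl v (cl e w0))
          - cl ((4 * B v e) • u - (4 * B u e) • v) w0 := by
      intro e
      apply hp.inj_iW
      have hstep : ιW (cl e (φ D')) = ⁅⁅a, (D : L)⁆, ιV e⁆ := by
        rw [← hφ D' e]
      rw [hstep, lie_lie, hφ D e, hactV e, hactW (cl e (φ D)),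
        hφ D ((4 * B v e) • u - (4 * B u e) • v), ← map_sub]
    have hCLIFF : ∀ e : V,
        cl v (cl u (cl e w0)) - cl u (cl v (cl e w0))
          - cl ((4 * B v e) • u - (4 * B u e) • v) w0
        = cl e (cl v (cl u w0) - cl u (cl v w0)) := by
      intro e
      have e1 : cl u (cl e w0) = -(cl e (cl u w0)) - (2 * B u e) • w0 := by
        have h := hAC u e w0
        linear_combination (norm := module) h
      have e2 : cl v (cl e (cl u w0)) = -(cl e (cl v (cl u w0))) - (2 * B v e) • cl u w0 := by
        have h := hAC v e (cl u w0)
        linear_combination (norm := module) h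
      have e3 : cl v (cl e w0) = -(cl e (cl v w0)) - (2 * B v e) • w0 := by
        have h := hAC v e w0
        linear_combination (norm := module) h
      have e4 : cl u (cl e (cl v w0)) = -(cl e (cl u (cl v w0))) - (2 * B u e) • cl v w0 := by
        have h := hAC u e (cl v w0)
        linear_combination (norm := module) h
      have P1 : cl v (cl u (cl e w0)) =
          cl e (cl v (cl u w0)) + (2 * B v e) • cl u w0 - (2 * B u e) • cl v w0 := by
        rw [e1, map_sub, map_neg, e2, map_smul]
        module
      have P2 : cl u (cl v (cl e w0)) =
          cl e (cl u (cl v w0)) + (2 * B u e) • cl v w0 - (2 * B v e) • cl u w0 := by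
        rw [e3, map_sub, map_neg, e4, map_smul]
        module
      have P3 : cl ((4 * B v e) • u - (4 * B u e) • v) w0
          = (4 * B v e) • cl u w0 - (4 * B u e) • cl v w0 := by
        rw [map_sub, map_smul, map_smul]
        simp [LinearMap.sub_apply, LinearMap.smul_apply]
      rw [P1, P2, P3, map_sub]
      module
    have hfin : ∀ e : V, cl e (φ D' - (cl v (cl u w0) - cl u (cl v w0))) = 0 := by
      intro e
      rw [map_sub, hkey e, hCLIFF e, sub_self]
    have h0 := hclnd _ hfin
    exact sub_eq_zero.mp h0
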